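/- arXiv:1306.4093 — 2 statements merged into one kernel-verified Lean document; each statement's English description precedes it below -/
import Mathlib

section
/- Let A be a complex unital Banach algebra with unit e and let a, b, c ∈ A be such that a has a Moore-Penrose inverse a†, a = bc, b⁻¹(0) = 0, and cA = A; let b† and c† denote the Moore-Penrose inverses of b and c. Then the following statements are equivalent: (i) a is EP; (ii) there exists an invertible x ∈ A with c = xb†; (iii) there exists y ∈ A with y⁻¹(0) = 0 and c = yb†; (iv) there exists an invertible u ∈ A with b = c†u; (v) there exist z₁, z₂ ∈ A with c = z₁b† and b† = z₂c; (vi) a ∈ c†A ∩ Ab†; (vii) a† ∈ bA ∩ Ac. -/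
noncomputable section

/-- An element `h` of a complex normed algebra is *hermitian* if `‖exp (i t h)‖ = 1`
for all real `t`. -/
def IsHermitianElem {A : Type*} [NormedRing A] [NormedAlgebra ℂ A] (h : A) : Prop :=
  ∀ t : ℝ, ‖NormedSpace.exp ((Complex.I * (t : ℂ)) • h)‖ = 1

/-- `x` is a Moore–Penrose inverse of `a`: `axa = a`, `xax = x`, and `ax`, `xa` are hermitian. -/
def IsMPInv {A : Type*} [NormedRing A] [NormedAlgebra ℂ A] (a x : A) : Prop :=
  a * x * a = a ∧ x * a * x = x ∧ IsHermitianElem (a * x) ∧ IsHermitianElem (x * a)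


set_option maxHeartbeats 1000000

section Helpers

variable {A : Type*} [NormedRing A] [NormedAlgebra ℂ A] [CompleteSpace A]

private lemma exp_idem' (p : A) (hp : p * p = p) (z : ℂ) :
    NormedSpace.exp (z • p) = 1 + (Complex.exp z - 1) • p := by
  have hpow : ∀ n : ℕ, (z • p) ^ (n + 1) = z ^ (n + 1) • p := by
    intro n
    induction n with
    | zero => simp
    | succ n ih =>
      rw [pow_succ, ih, smul_mul_assoc, mul_smul_comm, hp, smul_smul, ← pow_succ]
  have hs : Summable (fun n : ℕ => ((n.factorial : ℂ))⁻¹ • (z • p) ^ n) :=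
    NormedSpace.expSeries_summable' (z • p)
  have hsc : Summable (fun n : ℕ => ((n.factorial : ℂ))⁻¹ • z ^ n) :=
    NormedSpace.expSeries_summable' (𝕂 := ℂ) z
  have hsc' : Summable (fun n : ℕ => (((n + 1).factorial : ℂ))⁻¹ • z ^ (n + 1)) :=
    (summable_nat_add_iff 1).mpr hsc
  have hscsum : (∑' n : ℕ, (((n + 1).factorial : ℂ))⁻¹ • z ^ (n + 1)) = Complex.exp z - 1 := by
    have h0 := Summable.tsum_eq_zero_add hsc
    have he : Complex.exp z = ∑' n : ℕ, ((n.factorial : ℂ))⁻¹ • z ^ n := by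
      rw [Complex.exp_eq_exp_ℂ, NormedSpace.exp_eq_tsum (𝕂 := ℂ)]
    rw [he, h0]
    simp
  have htail : (∑' n : ℕ, (((n + 1).factorial : ℂ))⁻¹ • (z • p) ^ (n + 1))
      = (Complex.exp z - 1) • p := by
    rw [← hscsum, ← Summable.tsum_smul_const hsc']
    congr 1
    funext n
    rw [hpow, smul_smul, smul_eq_mul]
  simp only [NormedSpace.exp_eq_tsum (𝕂 := ℂ)]
  rw [Summable.tsum_eq_zero_add hs, htail]
  simp

private lemma norm_one_sub_two_smul' (p : A) (hherm : IsHermitianElem p) (hp : p * p = p) :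
    ‖(1 : A) - (2 : ℂ) • p‖ = 1 := by
  have h := hherm Real.pi
  rw [exp_idem' p hp] at h
  rw [mul_comm Complex.I, Complex.exp_pi_mul_I] at h
  norm_num at h
  rw [sub_eq_add_neg]
  exact h

private lemma sq_zero_core' (d : A) (hd : d * d = 0) (h : ‖(1 : A) + (2 : ℂ) • d‖ ≤ 1) :
    d = 0 := by
  have hn : ∀ n : ℕ, ((1 : A) + (2 : ℂ) • d) ^ (n + 1) = 1 + ((2 * (n + 1) : ℕ) : ℂ) • d := by
    intro n
    induction n with
    | zero => norm_num
    | succ n ih =>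
      rw [pow_succ, ih, add_mul, one_mul, mul_add, mul_one, smul_mul_assoc,
        mul_smul_comm, smul_smul, hd, smul_zero, add_zero, add_assoc, ← add_smul]
      congr 2
      push_cast
      ring
  have hbnd : ∀ n : ℕ, ((2 * (n + 1) : ℕ) : ℝ) * ‖d‖ ≤ 1 + ‖(1 : A)‖ := by
    intro n
    have h1 : ‖((1 : A) + (2 : ℂ) • d) ^ (n + 1)‖ ≤ 1 := by
      calc ‖((1 : A) + (2 : ℂ) • d) ^ (n + 1)‖ ≤ ‖(1 : A) + (2 : ℂ) • d‖ ^ (n + 1) :=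
            norm_pow_le' _ (Nat.succ_pos n)
        _ ≤ 1 := pow_le_one₀ (norm_nonneg _) h
    have h2 : ‖(((2 * (n + 1) : ℕ) : ℂ)) • d‖ ≤
        ‖(1 : A) + (((2 * (n + 1) : ℕ) : ℂ)) • d‖ + ‖(1 : A)‖ := by
      have := norm_sub_le ((1 : A) + (((2 * (n + 1) : ℕ) : ℂ)) • d) 1
      simpa using this
    rw [norm_smul, Complex.norm_natCast] at h2
    calc ((2 * (n + 1) : ℕ) : ℝ) * ‖d‖
        ≤ ‖(1 : A) + (((2 * (n + 1) : ℕ) : ℂ)) • d‖ + ‖(1 : A)‖ := h2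
      _ ≤ 1 + ‖(1 : A)‖ := by rw [← hn n]; exact add_le_add_left h1 _
  have hd0 : ‖d‖ ≤ 0 := by
    by_contra h0
    push_neg at h0
    obtain ⟨n, hngt⟩ := exists_nat_gt ((1 + ‖(1 : A)‖) / ‖d‖)
    have hbn := hbnd n
    rw [div_lt_iff₀ h0] at hngt
    have hge : ((2 * (n + 1) : ℕ) : ℝ) ≥ (n : ℝ) := by
      push_cast
      linarith [Nat.cast_nonneg (α := ℝ) n]
    nlinarith [norm_nonneg (1 : A), norm_nonneg d]
  rw [← norm_eq_zero]
  linarith [norm_nonneg d]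

private lemma herm_idem_eq₁ (p r : A) (hp : IsHermitianElem p) (hr : IsHermitianElem r)
    (hpp : p * p = p) (hrr : r * r = r) (hpr : p * r = r) (hrp : r * p = p) : p = r := by
  have hd : (r - p) * (r - p) = 0 := by
    rw [sub_mul, mul_sub, mul_sub, hrr, hrp, hpr, hpp]; abel
  have hu : ((1 : A) - (2 : ℂ) • p) * ((1 : A) - (2 : ℂ) • r) = 1 + (2 : ℂ) • (r - p) := by
    rw [sub_mul, one_mul, mul_sub, mul_one, smul_mul_assoc, mul_smul_comm, smul_smul, hpr]
    module
  have hn := norm_mul_le ((1 : A) - (2 : ℂ) • p) ((1 : A) - (2 : ℂ) • r)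
  rw [norm_one_sub_two_smul' p hp hpp, norm_one_sub_two_smul' r hr hrr, hu, one_mul] at hn
  have h0 := sq_zero_core' (r - p) hd hn
  rw [sub_eq_zero] at h0
  exact h0.symm

private lemma herm_idem_eq₂ (p r : A) (hp : IsHermitianElem p) (hr : IsHermitianElem r)
    (hpp : p * p = p) (hrr : r * r = r) (hpr : p * r = p) (hrp : r * p = r) : p = r := by
  have hd : (p - r) * (p - r) = 0 := by
    rw [sub_mul, mul_sub, mul_sub, hpp, hpr, hrp, hrr]; abel
  have hu : ((1 : A) - (2 : ℂ) • p) * ((1 : A) - (2 : ℂ) • r) = 1 + (2 : ℂ) • (p - r) := by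
    rw [sub_mul, one_mul, mul_sub, mul_one, smul_mul_assoc, mul_smul_comm, smul_smul, hpr]
    module
  have hn := norm_mul_le ((1 : A) - (2 : ℂ) • p) ((1 : A) - (2 : ℂ) • r)
  rw [norm_one_sub_two_smul' p hp hpp, norm_one_sub_two_smul' r hr hrr, hu, one_mul] at hn
  have h0 := sq_zero_core' (p - r) hd hn
  rw [sub_eq_zero] at h0
  exact h0

end Helpers

/-- If `a = bc` with `b⁻¹(0) = 0`, `cA = A` and Moore–Penrose inverses `a†`, `b†`, `c†`:
`a` is EP iff `c = xb†` with `x` invertible, iff `c = yb†` with `y⁻¹(0) = 0`, iff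
`b = c†u` with `u` invertible, iff `c = z₁b†` and `b† = z₂c`, iff `a ∈ c†A ∩ Ab†`,
iff `a† ∈ bA ∩ Ac`. -/
theorem ep_tfae_factorization_units {A : Type*} [NormedRing A] [NormedAlgebra ℂ A]
    [CompleteSpace A]
    (a b c ad bd cd : A) (had : IsMPInv a ad) (hbd : IsMPInv b bd) (hcd : IsMPInv c cd)
    (habc : a = b * c)
    (hb : {x : A | b * x = 0} = {0}) (hc : {y : A | ∃ x, y = c * x} = Set.univ) :
    List.TFAE
      [a * ad = ad * a,
       ∃ x : A, IsUnit x ∧ c = x * bd,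
       ∃ y : A, {x : A | y * x = 0} = {0} ∧ c = y * bd,
       ∃ u : A, IsUnit u ∧ b = cd * u,
       ∃ z₁ z₂ : A, c = z₁ * bd ∧ bd = z₂ * c,
       (∃ x : A, a = cd * x) ∧ (∃ y : A, a = y * bd),
       (∃ x : A, ad = b * x) ∧ (∃ y : A, ad = y * c)] := by
  obtain ⟨hA1, hA2, hA3, hA4⟩ := had
  obtain ⟨hB1, hB2, hB3, hB4⟩ := hbd
  obtain ⟨hC1, hC2, hC3, hC4⟩ := hcd
  -- bd * b = 1
  have F1 : bd * b = 1 := by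
    have hm : bd * b - 1 ∈ {x : A | b * x = 0} := by
      show b * (bd * b - 1) = 0
      rw [mul_sub, mul_one, ← mul_assoc, hB1, sub_self]
    rw [hb, Set.mem_singleton_iff, sub_eq_zero] at hm
    exact hm
  -- c * cd = 1
  have F2 : c * cd = 1 := by
    have h1 : (1 : A) ∈ {y : A | ∃ x, y = c * x} := by rw [hc]; trivial
    obtain ⟨x₀, hx₀⟩ := h1
    calc c * cd = c * cd * 1 := by rw [mul_one]
      _ = c * cd * (c * x₀) := by rw [← hx₀]
      _ = (c * cd * c) * x₀ := by noncomm_ring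
      _ = c * x₀ := by rw [hC1]
      _ = 1 := hx₀.symm
  -- auxiliary products
  have hx1 : a * (cd * bd) = b * bd := by
    calc a * (cd * bd) = (b * c) * (cd * bd) := by rw [habc]
      _ = b * (c * cd) * bd := by noncomm_ring
      _ = b * bd := by rw [F2, mul_one]
  have hy1 : b * bd * a = a := by
    calc b * bd * a = b * bd * (b * c) := by rw [habc]
      _ = (b * bd * b) * c := by noncomm_ring
      _ = b * c := by rw [hB1]
      _ = a := habc.symm
  have hz1 : a * (cd * c) = a := by
    calc a * (cd * c) = (b * c) * (cd * c) := by rw [habc]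
      _ = b * (c * cd) * c := by noncomm_ring
      _ = b * c := by rw [F2, mul_one]
      _ = a := habc.symm
  have hw1 : cd * bd * a = cd * c := by
    calc cd * bd * a = (cd * bd) * (b * c) := by rw [habc]
      _ = cd * (bd * b) * c := by noncomm_ring
      _ = cd * c := by rw [F1, mul_one]
  -- idempotents
  have fidem : (b * bd) * (b * bd) = b * bd := by
    calc (b * bd) * (b * bd) = (b * bd * b) * bd := by noncomm_ring
      _ = b * bd := by rw [hB1]
  have gidem : (cd * c) * (cd * c) = cd * c := by
    calc (cd * c) * (cd * c) = cd * (c * cd) * c := by noncomm_ring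
      _ = cd * c := by rw [F2, mul_one]
  have aadidem : (a * ad) * (a * ad) = a * ad := by
    calc (a * ad) * (a * ad) = (a * ad * a) * ad := by noncomm_ring
      _ = a * ad := by rw [hA1]
  have adaidem : (ad * a) * (ad * a) = ad * a := by
    calc (ad * a) * (ad * a) = (ad * a * ad) * a := by noncomm_ring
      _ = ad * a := by rw [hA2]
  -- E1 : a * ad = b * bd
  have E1 : a * ad = b * bd := by
    apply herm_idem_eq₁ (a * ad) (b * bd) hA3 hB3 aadidem fidem
    · calc (a * ad) * (b * bd) = (a * ad) * (a * (cd * bd)) := by rw [hx1]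
        _ = (a * ad * a) * (cd * bd) := by noncomm_ring
        _ = a * (cd * bd) := by rw [hA1]
        _ = b * bd := hx1
    · calc (b * bd) * (a * ad) = (b * bd * a) * ad := by noncomm_ring
        _ = a * ad := by rw [hy1]
  -- E2 : ad * a = cd * c
  have E2 : ad * a = cd * c := by
    apply herm_idem_eq₂ (ad * a) (cd * c) hA4 hC4 adaidem gidem
    · calc (ad * a) * (cd * c) = ad * (a * (cd * c)) := by noncomm_ring
        _ = ad * a := by rw [hz1]
    · calc (cd * c) * (ad * a) = ((cd * bd) * a) * (ad * a) := by rw [hw1]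
        _ = (cd * bd) * ((a * ad * a)) := by noncomm_ring
        _ = cd * bd * a := by rw [hA1]
        _ = cd * c := hw1
  -- EP reformulation
  have hEP_iff : (a * ad = ad * a) ↔ b * bd = cd * c := by
    rw [E1, E2]
  -- unit construction under EP
  have hunit : b * bd = cd * c → IsUnit (c * b) := by
    intro hfg
    have hm1 : (c * b) * (bd * cd) = 1 := by
      calc (c * b) * (bd * cd) = c * (b * bd) * cd := by noncomm_ring
        _ = c * (cd * c) * cd := by rw [hfg]
        _ = (c * cd) * (c * cd) := by noncomm_ring
        _ = 1 := by rw [F2, mul_one]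
    have hm2 : (bd * cd) * (c * b) = 1 := by
      calc (bd * cd) * (c * b) = bd * (cd * c) * b := by noncomm_ring
        _ = bd * (b * bd) * b := by rw [hfg]
        _ = (bd * b) * (bd * b) := by noncomm_ring
        _ = 1 := by rw [F1, mul_one]
    exact ⟨⟨c * b, bd * cd, hm1, hm2⟩, rfl⟩
  have hcbd : b * bd = cd * c → c = (c * b) * bd := by
    intro hfg
    calc c = (c * cd) * c := by rw [F2, one_mul]
      _ = c * (cd * c) := by noncomm_ring
      _ = c * (b * bd) := by rw [hfg]
      _ = (c * b) * bd := by noncomm_ring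
  tfae_have 1 → 2 := by
    intro h1
    exact ⟨c * b, hunit (hEP_iff.mp h1), hcbd (hEP_iff.mp h1)⟩
  tfae_have 2 → 3 := by
    rintro ⟨x, hx, hcx⟩
    refine ⟨x, ?_, hcx⟩
    ext v
    simp only [Set.mem_setOf_eq, Set.mem_singleton_iff]
    constructor
    · intro hv
      exact hx.mul_left_cancel (by rw [hv, mul_zero])
    · rintro rfl
      exact mul_zero x
  tfae_have 3 → 1 := by
    rintro ⟨y, hy, hcy⟩
    apply hEP_iff.mpr
    have hcf : c * (b * bd) = c := by
      calc c * (b * bd) = (y * bd) * (b * bd) := by rw [← hcy]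
        _ = y * (bd * b) * bd := by noncomm_ring
        _ = y * bd := by rw [F1, mul_one]
        _ = c := hcy.symm
    have hgf : (cd * c) * (b * bd) = cd * c := by
      calc (cd * c) * (b * bd) = cd * (c * (b * bd)) := by noncomm_ring
        _ = cd * c := by rw [hcf]
    have hbdg : bd * (cd * c) = bd := by
      have hmem : bd * (cd * c) - bd ∈ {x : A | y * x = 0} := by
        show y * (bd * (cd * c) - bd) = 0
        have e1 : y * (bd * (cd * c)) = (y * bd) * (cd * c) := by noncomm_ring
        rw [mul_sub, e1, ← hcy]
        calc c * (cd * c) - c = (c * cd) * c - c := by noncomm_ring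
          _ = c - c := by rw [F2, one_mul]
          _ = 0 := sub_self c
      rw [hy, Set.mem_singleton_iff, sub_eq_zero] at hmem
      exact hmem
    have hfg : (b * bd) * (cd * c) = b * bd := by
      calc (b * bd) * (cd * c) = b * (bd * (cd * c)) := by noncomm_ring
        _ = b * bd := by rw [hbdg]
    exact herm_idem_eq₂ (b * bd) (cd * c) hB3 hC4 fidem gidem hfg hgf
  tfae_have 1 → 4 := by
    intro h1
    have hfg := hEP_iff.mp h1
    refine ⟨c * b, hunit hfg, ?_⟩
    calc b = (b * bd) * b := by rw [hB1]
      _ = (cd * c) * b := by rw [hfg]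
      _ = cd * (c * b) := by noncomm_ring
  tfae_have 4 → 1 := by
    rintro ⟨u, hu, hbu⟩
    apply hEP_iff.mpr
    obtain ⟨U, hU⟩ := hu
    have hcdeq : cd = b * ↑U⁻¹ := by
      calc cd = cd * (u * ↑U⁻¹) := by rw [← hU, Units.mul_inv, mul_one]
        _ = (cd * u) * ↑U⁻¹ := by noncomm_ring
        _ = b * ↑U⁻¹ := by rw [← hbu]
    have hfcd : (b * bd) * cd = cd := by
      calc (b * bd) * cd = (b * bd) * (b * ↑U⁻¹) := by rw [← hcdeq]
        _ = (b * bd * b) * ↑U⁻¹ := by noncomm_ring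
        _ = b * ↑U⁻¹ := by rw [hB1]
        _ = cd := hcdeq.symm
    have hfg : (b * bd) * (cd * c) = cd * c := by
      calc (b * bd) * (cd * c) = ((b * bd) * cd) * c := by noncomm_ring
        _ = cd * c := by rw [hfcd]
    have hgb : (cd * c) * b = b := by
      calc (cd * c) * b = (cd * c) * (cd * u) := by rw [← hbu]
        _ = cd * (c * cd) * u := by noncomm_ring
        _ = cd * u := by rw [F2, mul_one]
        _ = b := hbu.symm
    have hgf : (cd * c) * (b * bd) = b * bd := by
      calc (cd * c) * (b * bd) = ((cd * c) * b) * bd := by noncomm_ring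
        _ = b * bd := by rw [hgb]
    exact herm_idem_eq₁ (b * bd) (cd * c) hB3 hC4 fidem gidem hfg hgf
  tfae_have 1 → 5 := by
    intro h1
    have hfg := hEP_iff.mp h1
    refine ⟨c * b, bd * cd, hcbd hfg, ?_⟩
    calc bd = (bd * b) * bd := by rw [F1, one_mul]
      _ = bd * (b * bd) := by noncomm_ring
      _ = bd * (cd * c) := by rw [hfg]
      _ = (bd * cd) * c := by noncomm_ring
  tfae_have 5 → 1 := by
    rintro ⟨z₁, z₂, hc1, hb1⟩
    apply hEP_iff.mpr
    have hcf : c * (b * bd) = c := by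
      calc c * (b * bd) = (z₁ * bd) * (b * bd) := by rw [← hc1]
        _ = z₁ * (bd * b) * bd := by noncomm_ring
        _ = z₁ * bd := by rw [F1, mul_one]
        _ = c := hc1.symm
    have hgf : (cd * c) * (b * bd) = cd * c := by
      calc (cd * c) * (b * bd) = cd * (c * (b * bd)) := by noncomm_ring
        _ = cd * c := by rw [hcf]
    have hbdg : bd * (cd * c) = bd := by
      calc bd * (cd * c) = (z₂ * c) * (cd * c) := by rw [← hb1]
        _ = z₂ * (c * cd) * c := by noncomm_ring
        _ = z₂ * c := by rw [F2, mul_one]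
        _ = bd := hb1.symm
    have hfg : (b * bd) * (cd * c) = b * bd := by
      calc (b * bd) * (cd * c) = b * (bd * (cd * c)) := by noncomm_ring
        _ = b * bd := by rw [hbdg]
    exact herm_idem_eq₂ (b * bd) (cd * c) hB3 hC4 fidem gidem hfg hgf
  tfae_have 1 → 6 := by
    intro h1
    have hfg := hEP_iff.mp h1
    constructor
    · refine ⟨c * a, ?_⟩
      calc a = b * bd * a := hy1.symm
        _ = (cd * c) * a := by rw [hfg]
        _ = cd * (c * a) := by noncomm_ring
    · refine ⟨a * b, ?_⟩
      calc a = a * (cd * c) := hz1.symm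
        _ = a * (b * bd) := by rw [hfg]
        _ = (a * b) * bd := by noncomm_ring
  tfae_have 6 → 1 := by
    rintro ⟨⟨x, hax⟩, ⟨y, hay⟩⟩
    apply hEP_iff.mpr
    have hga : (cd * c) * a = a := by
      calc (cd * c) * a = (cd * c) * (cd * x) := by rw [← hax]
        _ = cd * (c * cd) * x := by noncomm_ring
        _ = cd * x := by rw [F2, mul_one]
        _ = a := hax.symm
    have hgb : cd * c * b = b := by
      have hga' : (cd * c) * (b * c) = b * c := by rw [← habc]; exact hga
      calc cd * c * b = cd * c * b * (c * cd) := by rw [F2, mul_one]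
        _ = ((cd * c) * (b * c)) * cd := by noncomm_ring
        _ = (b * c) * cd := by rw [hga']
        _ = b * (c * cd) := by noncomm_ring
        _ = b := by rw [F2, mul_one]
    have hgf : (cd * c) * (b * bd) = b * bd := by
      calc (cd * c) * (b * bd) = (cd * c * b) * bd := by noncomm_ring
        _ = b * bd := by rw [hgb]
    have haf : a * (b * bd) = a := by
      calc a * (b * bd) = (y * bd) * (b * bd) := by rw [← hay]
        _ = y * (bd * b) * bd := by noncomm_ring
        _ = y * bd := by rw [F1, mul_one]
        _ = a := hay.symm
    have hcbbd : c * (b * bd) = c := by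
      have hmem : c * (b * bd) - c ∈ {x : A | b * x = 0} := by
        show b * (c * (b * bd) - c) = 0
        have e1 : b * (c * (b * bd)) = (b * c) * (b * bd) := by noncomm_ring
        rw [mul_sub, e1, ← habc, haf, sub_self]
      rw [hb, Set.mem_singleton_iff, sub_eq_zero] at hmem
      exact hmem
    have hgf2 : (cd * c) * (b * bd) = cd * c := by
      calc (cd * c) * (b * bd) = cd * (c * (b * bd)) := by noncomm_ring
        _ = cd * c := by rw [hcbbd]
    rw [← hgf, hgf2]
  tfae_have 1 → 7 := by
    intro h1
    have hfg := hEP_iff.mp h1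
    constructor
    · refine ⟨bd * ad, ?_⟩
      calc ad = (ad * a) * ad := by rw [hA2]
        _ = (cd * c) * ad := by rw [E2]
        _ = (b * bd) * ad := by rw [← hfg]
        _ = b * (bd * ad) := by noncomm_ring
    · refine ⟨ad * cd, ?_⟩
      calc ad = ad * (a * ad) := by rw [← mul_assoc, hA2]
        _ = ad * (b * bd) := by rw [E1]
        _ = ad * (cd * c) := by rw [hfg]
        _ = (ad * cd) * c := by noncomm_ring
  tfae_have 7 → 1 := by
    rintro ⟨⟨x, hadx⟩, ⟨y, hady⟩⟩
    apply hEP_iff.mpr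
    have hfad : (b * bd) * ad = ad := by
      calc (b * bd) * ad = (b * bd) * (b * x) := by rw [← hadx]
        _ = (b * bd * b) * x := by noncomm_ring
        _ = b * x := by rw [hB1]
        _ = ad := hadx.symm
    have hfg : (b * bd) * (cd * c) = cd * c := by
      calc (b * bd) * (cd * c) = (b * bd) * (ad * a) := by rw [E2]
        _ = ((b * bd) * ad) * a := by noncomm_ring
        _ = ad * a := by rw [hfad]
        _ = cd * c := E2
    have hadg : ad * (cd * c) = ad := by
      calc ad * (cd * c) = (y * c) * (cd * c) := by rw [← hady]
        _ = y * (c * cd) * c := by noncomm_ring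
        _ = y * c := by rw [F2, mul_one]
        _ = ad := hady.symm
    have hfg2 : (b * bd) * (cd * c) = b * bd := by
      calc (b * bd) * (cd * c) = (a * ad) * (cd * c) := by rw [E1]
        _ = a * (ad * (cd * c)) := by noncomm_ring
        _ = a * ad := by rw [hadg]
        _ = b * bd := E1
    rw [← hfg2, hfg]
  tfae_finish
end
end

section
/- Let A be a complex unital Banach algebra and let a ∈ A have a Moore-Penrose inverse a†. Then the following statements are equivalent: (i) a is EP; (ii) there exist b₁, c₁, d₁, f₁, g₁ ∈ A such that a = b₁c₁g₁, a† = f₁d₁g₁, c₁⁻¹(0) = d₁⁻¹(0), and b₁⁻¹(0) = f₁⁻¹(0) = 0; (iii) there exist h₁, k₁, l₁, m₁, n₁ ∈ A such that a = h₁k₁l₁, a† = h₁m₁n₁, l₁A = A = n₁A, and k₁A = m₁A; (iv) there exist b₂, c₂, d₂, g₂, g₃ ∈ A such that a = b₂c₂g₂, a† = b₂d₂g₃, (c₂)₋₁(0) = (d₂)₋₁(0), and (g₂)₋₁(0) = (g₃)₋₁(0) = 0; (v) there exist h₂, h₃, k₂, l₂, m₂ ∈ A such that a = h₂k₂l₂,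 a† = h₃m₂l₂, Ak₂ = Am₂, and Ah₂ = Ah₃ = A. -/
noncomputable section

section Aux

variable {A : Type*} [NormedRing A] [NormedAlgebra ℂ A] [CompleteSpace A]

open NormedSpace Nat in
/-- Exponential of a scalar multiple of an idempotent. -/
lemma exp_smul_idem (p : A) (hp : p * p = p) (c : ℂ) :
    NormedSpace.exp (c • p) = 1 + (Complex.exp c - 1) • p := by
  have hpow : ∀ n : ℕ, (c • p) ^ (n + 1) = c ^ (n + 1) • p := by
    intro n
    induction n with
    | zero => simp
    | succ n ih =>
      rw [pow_succ, ih, smul_mul_smul_comm, hp, ← pow_succ]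
  have hs : Summable fun n : ℕ => (n !⁻¹ : ℂ) • (c • p) ^ n :=
    expSeries_summable' (c • p)
  have hsc : Summable fun n : ℕ => (n !⁻¹ : ℂ) • c ^ n := expSeries_summable' c
  have hsc' : Summable fun n : ℕ => ((n + 1)!⁻¹ : ℂ) * c ^ (n + 1) := by
    have := (hsc.comp_injective Nat.succ_injective)
    simpa [Function.comp_def, smul_eq_mul] using this
  have hshift : ∑' n : ℕ, (((n + 1))!⁻¹ : ℂ) * c ^ (n + 1) = Complex.exp c - 1 := by
    have h1 : Complex.exp c = ∑' n : ℕ, (n !⁻¹ : ℂ) • c ^ n := by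
      rw [Complex.exp_eq_exp_ℂ, exp_eq_tsum ℂ]
    rw [Summable.tsum_eq_zero_add hsc] at h1
    simp only [smul_eq_mul, pow_zero, Nat.factorial_zero] at h1
    rw [h1]; simp
  rw [exp_eq_tsum ℂ]
  beta_reduce
  rw [Summable.tsum_eq_zero_add hs]
  simp only [hpow, pow_zero, Nat.factorial_zero, smul_smul]
  rw [Summable.tsum_smul_const]
  · rw [hshift]; simp
  · exact hsc'

/-- For a hermitian idempotent `p`, the element `1 - 2p` has norm one. -/
lemma norm_herm_idem (p : A) (hp : p * p = p) (hherm : IsHermitianElem p) :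
    ‖(1 : A) + (-2 : ℂ) • p‖ = 1 := by
  have h := hherm Real.pi
  rw [exp_smul_idem p hp] at h
  have hc : Complex.exp (Complex.I * (Real.pi : ℂ)) - 1 = -2 := by
    rw [mul_comm, Complex.exp_pi_mul_I]; ring
  rwa [hc] at h

/-- If `n² = 0` and `‖1 + 2n‖ ≤ 1` then `n = 0`. -/
lemma sq_zero_eq_zero (n : A) (hn : n * n = 0) (hb : ‖(1 : A) + (2 : ℂ) • n‖ ≤ 1) :
    n = 0 := by
  have hpow : ∀ k : ℕ, ((1 : A) + (2 : ℂ) • n) ^ k = 1 + (((2 * k : ℕ) : ℂ)) • n := by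
    intro k
    induction k with
    | zero => simp
    | succ k ih =>
      rw [pow_succ, ih]
      have hzero : n * ((2 : ℂ) • n) = 0 := by rw [mul_smul_comm, hn, smul_zero]
      simp only [mul_add, add_mul, one_mul, mul_one, smul_mul_assoc, hzero,
        smul_zero, add_zero]
      push_cast
      module
  have hbk : ∀ k : ℕ, ‖(1 : A) + (((2 * (k + 1) : ℕ) : ℂ)) • n‖ ≤ 1 := by
    intro k
    have h1 : ‖((1 : A) + (2 : ℂ) • n) ^ (k + 1)‖ ≤ ‖(1 : A) + (2 : ℂ) • n‖ ^ (k + 1) :=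
      norm_pow_le' _ (Nat.succ_pos k)
    have h2 : ‖(1 : A) + (2 : ℂ) • n‖ ^ (k + 1) ≤ 1 :=
      pow_le_one₀ (norm_nonneg _) hb
    calc ‖(1 : A) + (((2 * (k + 1) : ℕ) : ℂ)) • n‖
        = ‖((1 : A) + (2 : ℂ) • n) ^ (k + 1)‖ := by rw [hpow]
      _ ≤ 1 := h1.trans h2
  have hnorm : ∀ k : ℕ, ((2 * (k + 1) : ℕ) : ℝ) * ‖n‖ ≤ 1 + ‖(1 : A)‖ := by
    intro k
    have heq : ((1 : A) + (((2 * (k + 1) : ℕ) : ℂ)) • n) - 1 = (((2 * (k + 1) : ℕ) : ℂ)) • n := by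
      abel
    have h3 : ‖(((2 * (k + 1) : ℕ) : ℂ)) • n‖
        ≤ ‖(1 : A) + (((2 * (k + 1) : ℕ) : ℂ)) • n‖ + ‖(1 : A)‖ := by
      have h5 := norm_sub_le ((1 : A) + (((2 * (k + 1) : ℕ) : ℂ)) • n) 1
      rwa [heq] at h5
    have h4 : ‖(((2 * (k + 1) : ℕ) : ℂ)) • n‖ = ((2 * (k + 1) : ℕ) : ℝ) * ‖n‖ := by
      rw [norm_smul, Complex.norm_natCast]
    rw [← h4]
    exact h3.trans (by linarith [hbk k])
  by_contra hne
  have hpos : 0 < ‖n‖ := norm_pos_iff.mpr hne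
  obtain ⟨k, hk⟩ := exists_nat_gt ((1 + ‖(1 : A)‖) / (2 * ‖n‖))
  have h5 := hnorm k
  push_cast at h5
  have hk2 : (1 + ‖(1 : A)‖) < 2 * ((k : ℝ) + 1) * ‖n‖ := by
    rw [div_lt_iff₀ (by positivity)] at hk
    nlinarith
  linarith

/-- Two hermitian idempotents whose product relations force a square-zero difference are equal. -/
lemma herm_core (p q n : A) (hp : p * p = p) (hq : q * q = q)
    (hhp : IsHermitianElem p) (hhq : IsHermitianElem q) (hn : n * n = 0)
    (hprod : ((1 : A) + (-2 : ℂ) • p) * ((1 : A) + (-2 : ℂ) • q) = 1 + (2 : ℂ) • n) :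
    n = 0 := by
  apply sq_zero_eq_zero n hn
  rw [← hprod]
  calc ‖((1 : A) + (-2 : ℂ) • p) * ((1 : A) + (-2 : ℂ) • q)‖
      ≤ ‖(1 : A) + (-2 : ℂ) • p‖ * ‖(1 : A) + (-2 : ℂ) • q‖ := norm_mul_le _ _
    _ = 1 := by rw [norm_herm_idem p hp hhp, norm_herm_idem q hq hhq, one_mul]

lemma ep_of_case1 (a ad : A) (had : IsMPInv a ad)
    (h1 : a * a * ad = a) (h2 : ad * ad * a = ad) : a * ad = ad * a := by
  obtain ⟨hada, hdad, hherm1, hherm2⟩ := had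
  set p := a * ad with hpdef
  set q := ad * a with hqdef
  have hp : p * p = p := by
    show a * ad * (a * ad) = a * ad
    rw [← mul_assoc, hada]
  have hq : q * q = q := by
    show ad * a * (ad * a) = ad * a
    rw [← mul_assoc, hdad]
  have hpq : p * q = p := by
    show a * ad * (ad * a) = a * ad
    calc a * ad * (ad * a) = a * (ad * ad * a) := by noncomm_ring
      _ = a * ad := by rw [h2]
  have hqp : q * p = q := by
    show ad * a * (a * ad) = ad * a
    calc ad * a * (a * ad) = ad * (a * a * ad) := by noncomm_ring
      _ = ad * a := by rw [h1]
  have hn : (p - q) * (p - q) = 0 := by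
    rw [sub_mul, mul_sub, mul_sub, hp, hq, hpq, hqp]
    abel
  have hprod : ((1 : A) + (-2 : ℂ) • p) * ((1 : A) + (-2 : ℂ) • q) = 1 + (2 : ℂ) • (p - q) := by
    rw [mul_add, add_mul, add_mul]
    simp only [one_mul, mul_one, smul_mul_assoc, mul_smul_comm, smul_smul, hpq]
    module
  have := herm_core p q (p - q) hp hq hherm1 hherm2 hn hprod
  have : p = q := by rwa [sub_eq_zero] at this
  exact this

lemma ep_of_case2 (a ad : A) (had : IsMPInv a ad)
    (h1 : ad * a * a = a) (h2 : a * ad * ad = ad) : a * ad = ad * a := by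
  obtain ⟨hada, hdad, hherm1, hherm2⟩ := had
  set p := a * ad with hpdef
  set q := ad * a with hqdef
  have hp : p * p = p := by
    show a * ad * (a * ad) = a * ad
    rw [← mul_assoc, hada]
  have hq : q * q = q := by
    show ad * a * (ad * a) = ad * a
    rw [← mul_assoc, hdad]
  have hpq : p * q = q := by
    show a * ad * (ad * a) = ad * a
    calc a * ad * (ad * a) = a * ad * ad * a := by noncomm_ring
      _ = ad * a := by rw [h2]
  have hqp : q * p = p := by
    show ad * a * (a * ad) = a * ad
    calc ad * a * (a * ad) = ad * a * a * ad := by noncomm_ring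
      _ = a * ad := by rw [h1]
  have hn : (q - p) * (q - p) = 0 := by
    rw [sub_mul, mul_sub, mul_sub, hp, hq, hpq, hqp]
    abel
  have hprod : ((1 : A) + (-2 : ℂ) • p) * ((1 : A) + (-2 : ℂ) • q) = 1 + (2 : ℂ) • (q - p) := by
    rw [mul_add, add_mul, add_mul]
    simp only [one_mul, mul_one, smul_mul_assoc, mul_smul_comm, smul_smul, hpq]
    module
  have := herm_core p q (q - p) hp hq hherm1 hherm2 hn hprod
  have : q = p := by rwa [sub_eq_zero] at this
  exact this.symm

end Aux

/-- For `a` with Moore–Penrose inverse `a†` in a Banach algebra: `a` is EP iff it admits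
any of the four displayed factorizations `a = ucv`, `a† = u'c'v'`. -/
theorem ep_tfae_three_factor {A : Type*} [NormedRing A] [NormedAlgebra ℂ A] [CompleteSpace A]
    (a ad : A) (had : IsMPInv a ad) :
    List.TFAE
      [a * ad = ad * a,
       ∃ b₁ c₁ d₁ f₁ g₁ : A, a = b₁ * c₁ * g₁ ∧ ad = f₁ * d₁ * g₁ ∧
         {x : A | c₁ * x = 0} = {x : A | d₁ * x = 0} ∧
         {x : A | b₁ * x = 0} = {0} ∧ {x : A | f₁ * x = 0} = {0},
       ∃ h₁ k₁ l₁ m₁ n₁ : A, a = h₁ * k₁ * l₁ ∧ ad = h₁ * m₁ * n₁ ∧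
         {y : A | ∃ x, y = l₁ * x} = Set.univ ∧ {y : A | ∃ x, y = n₁ * x} = Set.univ ∧
         {y : A | ∃ x, y = k₁ * x} = {y : A | ∃ x, y = m₁ * x},
       ∃ b₂ c₂ d₂ g₂ g₃ : A, a = b₂ * c₂ * g₂ ∧ ad = b₂ * d₂ * g₃ ∧
         {x : A | x * c₂ = 0} = {x : A | x * d₂ = 0} ∧
         {x : A | x * g₂ = 0} = {0} ∧ {x : A | x * g₃ = 0} = {0},
       ∃ h₂ h₃ k₂ l₂ m₂ : A, a = h₂ * k₂ * l₂ ∧ ad = h₃ * m₂ * l₂ ∧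
         {y : A | ∃ x, y = x * k₂} = {y : A | ∃ x, y = x * m₂} ∧
         {y : A | ∃ x, y = x * h₂} = Set.univ ∧ {y : A | ∃ x, y = x * h₃} = Set.univ] := by
  obtain ⟨hada, hdad, hherm1, hherm2⟩ := had
  -- consequences of EP
  have ep_ids : a * ad = ad * a →
      (a * a * ad = a ∧ ad * a * a = a ∧ ad * ad * a = ad ∧ a * ad * ad = ad) := by
    intro h
    refine ⟨?_, ?_, ?_, ?_⟩
    · calc a * a * ad = a * (a * ad) := by rw [mul_assoc]
        _ = a * (ad * a) := by rw [h]
        _ = a * ad * a := by rw [mul_assoc]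
        _ = a := hada
    · calc ad * a * a = (ad * a) * a := rfl
        _ = (a * ad) * a := by rw [h]
        _ = a := hada
    · calc ad * ad * a = ad * (ad * a) := by rw [mul_assoc]
        _ = ad * (a * ad) := by rw [h]
        _ = ad * a * ad := by rw [mul_assoc]
        _ = ad := hdad
    · calc a * ad * ad = (a * ad) * ad := rfl
        _ = (ad * a) * ad := by rw [h]
        _ = ad := hdad
  tfae_have 1 → 2 := by
    intro h
    obtain ⟨e1, e2, e3, e4⟩ := ep_ids h
    refine ⟨1, a, ad, 1, 1, by simp, by simp, ?_, by simp, by simp⟩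
    ext x
    simp only [Set.mem_setOf_eq]
    constructor
    · intro hx
      calc ad * x = ad * ad * a * x := by rw [e3]
        _ = ad * ad * (a * x) := by rw [mul_assoc]
        _ = 0 := by rw [hx, mul_zero]
    · intro hx
      calc a * x = a * a * ad * x := by rw [e1]
        _ = a * a * (ad * x) := by rw [mul_assoc]
        _ = 0 := by rw [hx, mul_zero]
  tfae_have 2 → 1 := by
    rintro ⟨b, c, d, f, g, hA, hD, hcd, hb, hf⟩
    have key1 : ∀ x, a * x = 0 → ad * x = 0 := by
      intro x hx
      have h1 : b * (c * (g * x)) = 0 := by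
        rw [hA] at hx; rw [← hx]; noncomm_ring
      have h2 : c * (g * x) = 0 := by
        have := (Set.ext_iff.mp hb (c * (g * x))).mp h1
        simpa using this
      have h3 : d * (g * x) = 0 := (Set.ext_iff.mp hcd (g * x)).mp h2
      rw [hD]
      calc f * d * g * x = f * (d * (g * x)) := by noncomm_ring
        _ = 0 := by rw [h3, mul_zero]
    have key2 : ∀ x, ad * x = 0 → a * x = 0 := by
      intro x hx
      have h1 : f * (d * (g * x)) = 0 := by
        rw [hD] at hx; rw [← hx]; noncomm_ring
      have h2 : d * (g * x) = 0 := by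
        have := (Set.ext_iff.mp hf (d * (g * x))).mp h1
        simpa using this
      have h3 : c * (g * x) = 0 := (Set.ext_iff.mp hcd (g * x)).mpr h2
      rw [hA]
      calc b * c * g * x = b * (c * (g * x)) := by noncomm_ring
        _ = 0 := by rw [h3, mul_zero]
    have e1 : a * a * ad = a := by
      have hx : ad * (1 - a * ad) = 0 := by
        rw [mul_sub, mul_one, ← mul_assoc, hdad, sub_self]
      have := key2 _ hx
      rw [mul_sub, mul_one] at this
      have := sub_eq_zero.mp this
      rw [← mul_assoc] at this
      exact this.symm
    have e2 : ad * ad * a = ad := by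
      have hx : a * (1 - ad * a) = 0 := by
        rw [mul_sub, mul_one, ← mul_assoc, hada, sub_self]
      have := key1 _ hx
      rw [mul_sub, mul_one] at this
      have := sub_eq_zero.mp this
      rw [← mul_assoc] at this
      exact this.symm
    exact ep_of_case1 a ad ⟨hada, hdad, hherm1, hherm2⟩ e1 e2
  tfae_have 1 → 3 := by
    intro h
    obtain ⟨e1, e2, e3, e4⟩ := ep_ids h
    refine ⟨1, a, 1, ad, 1, by simp, by simp, by simp [Set.eq_univ_iff_forall], by
      simp [Set.eq_univ_iff_forall], ?_⟩
    ext y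
    simp only [Set.mem_setOf_eq]
    constructor
    · rintro ⟨x, rfl⟩
      exact ⟨a * (a * x), by rw [← mul_assoc, ← mul_assoc, e2]⟩
    · rintro ⟨x, rfl⟩
      exact ⟨ad * (ad * x), by rw [← mul_assoc, ← mul_assoc, e4]⟩
  tfae_have 3 → 1 := by
    rintro ⟨h, k, l, m, n, hA, hD, hl, hn, hkm⟩
    obtain ⟨s, hs⟩ : ∃ s, (1 : A) = l * s := Set.eq_univ_iff_forall.mp hl 1
    obtain ⟨t, ht⟩ : ∃ t, (1 : A) = n * t := Set.eq_univ_iff_forall.mp hn 1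
    have key1 : ∀ x, ∃ y, a * x = ad * y := by
      intro x
      obtain ⟨z, hz⟩ : k * (l * x) ∈ {y : A | ∃ w, y = m * w} := by
        rw [← hkm]; exact ⟨l * x, rfl⟩
      refine ⟨t * z, ?_⟩
      calc a * x = h * (k * (l * x)) := by rw [hA]; noncomm_ring
        _ = h * (m * z) := by rw [hz]
        _ = h * (m * ((n * t) * z)) := by rw [← ht, one_mul]
        _ = ad * (t * z) := by rw [hD]; noncomm_ring
    have key2 : ∀ x, ∃ y, ad * x = a * y := by
      intro x
      obtain ⟨z, hz⟩ : m * (n * x) ∈ {y : A | ∃ w, y = k * w} := by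
        rw [hkm]; exact ⟨n * x, rfl⟩
      refine ⟨s * z, ?_⟩
      calc ad * x = h * (m * (n * x)) := by rw [hD]; noncomm_ring
        _ = h * (k * z) := by rw [hz]
        _ = h * (k * ((l * s) * z)) := by rw [← hs, one_mul]
        _ = a * (s * z) := by rw [hA]; noncomm_ring
    obtain ⟨y1, hy1⟩ := key1 1
    rw [mul_one] at hy1
    obtain ⟨y2, hy2⟩ := key2 1
    rw [mul_one] at hy2
    have e1 : ad * a * a = a := by
      calc ad * a * a = ad * a * (ad * y1) := by rw [← hy1]
        _ = (ad * a * ad) * y1 := by noncomm_ring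
        _ = ad * y1 := by rw [hdad]
        _ = a := hy1.symm
    have e2 : a * ad * ad = ad := by
      calc a * ad * ad = a * ad * (a * y2) := by rw [← hy2]
        _ = (a * ad * a) * y2 := by noncomm_ring
        _ = a * y2 := by rw [hada]
        _ = ad := hy2.symm
    exact ep_of_case2 a ad ⟨hada, hdad, hherm1, hherm2⟩ e1 e2
  tfae_have 1 → 4 := by
    intro h
    obtain ⟨e1, e2, e3, e4⟩ := ep_ids h
    refine ⟨1, a, ad, 1, 1, by simp, by simp, ?_, by simp, by simp⟩
    ext x
    simp only [Set.mem_setOf_eq]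
    constructor
    · intro hx
      calc x * ad = x * (a * ad * ad) := by rw [e4]
        _ = (x * a) * (ad * ad) := by noncomm_ring
        _ = 0 := by rw [hx, zero_mul]
    · intro hx
      calc x * a = x * (ad * a * a) := by rw [e2]
        _ = (x * ad) * (a * a) := by noncomm_ring
        _ = 0 := by rw [hx, zero_mul]
  tfae_have 4 → 1 := by
    rintro ⟨b, c, d, g, g', hA, hD, hcd, hg, hg'⟩
    have key1 : ∀ x, x * a = 0 → x * ad = 0 := by
      intro x hx
      have h1 : ((x * b) * c) * g = 0 := by
        rw [hA] at hx; rw [← hx]; noncomm_ring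
      have h2 : (x * b) * c = 0 := by
        have := (Set.ext_iff.mp hg ((x * b) * c)).mp h1
        simpa using this
      have h3 : (x * b) * d = 0 := (Set.ext_iff.mp hcd (x * b)).mp h2
      rw [hD]
      calc x * (b * d * g') = ((x * b) * d) * g' := by noncomm_ring
        _ = 0 := by rw [h3, zero_mul]
    have key2 : ∀ x, x * ad = 0 → x * a = 0 := by
      intro x hx
      have h1 : ((x * b) * d) * g' = 0 := by
        rw [hD] at hx; rw [← hx]; noncomm_ring
      have h2 : (x * b) * d = 0 := by
        have := (Set.ext_iff.mp hg' ((x * b) * d)).mp h1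
        simpa using this
      have h3 : (x * b) * c = 0 := (Set.ext_iff.mp hcd (x * b)).mpr h2
      rw [hA]
      calc x * (b * c * g) = ((x * b) * c) * g := by noncomm_ring
        _ = 0 := by rw [h3, zero_mul]
    have e1 : ad * a * a = a := by
      have hx : (1 - ad * a) * ad = 0 := by
        rw [sub_mul, one_mul, hdad, sub_self]
      have := key2 _ hx
      rw [sub_mul, one_mul] at this
      exact (sub_eq_zero.mp this).symm
    have e2 : a * ad * ad = ad := by
      have hx : (1 - a * ad) * a = 0 := by
        rw [sub_mul, one_mul, hada, sub_self]
      have := key1 _ hx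
      rw [sub_mul, one_mul] at this
      exact (sub_eq_zero.mp this).symm
    exact ep_of_case2 a ad ⟨hada, hdad, hherm1, hherm2⟩ e1 e2
  tfae_have 1 → 5 := by
    intro h
    obtain ⟨e1, e2, e3, e4⟩ := ep_ids h
    refine ⟨1, 1, a, 1, ad, by simp, by simp, ?_, by simp [Set.eq_univ_iff_forall], by
      simp [Set.eq_univ_iff_forall]⟩
    ext y
    simp only [Set.mem_setOf_eq]
    constructor
    · rintro ⟨x, rfl⟩
      exact ⟨x * a * a, by rw [mul_assoc, mul_assoc, ← mul_assoc a a ad, e1]⟩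
    · rintro ⟨x, rfl⟩
      exact ⟨x * ad * ad, by rw [mul_assoc, mul_assoc, ← mul_assoc ad ad a, e3]⟩
  tfae_have 5 → 1 := by
    rintro ⟨h, h', k, l, m, hA, hD, hkm, hh, hh'⟩
    obtain ⟨s, hs⟩ : ∃ s, (1 : A) = s * h := Set.eq_univ_iff_forall.mp hh 1
    obtain ⟨t, ht⟩ : ∃ t, (1 : A) = t * h' := Set.eq_univ_iff_forall.mp hh' 1
    have key1 : ∀ x, ∃ y, x * a = y * ad := by
      intro x
      obtain ⟨z, hz⟩ : (x * h) * k ∈ {y : A | ∃ w, y = w * m} := by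
        rw [← hkm]; exact ⟨x * h, rfl⟩
      refine ⟨z * t, ?_⟩
      calc x * a = ((x * h) * k) * l := by rw [hA]; noncomm_ring
        _ = (z * m) * l := by rw [hz]
        _ = ((z * (t * h')) * m) * l := by rw [← ht, mul_one]
        _ = (z * t) * ad := by rw [hD]; noncomm_ring
    have key2 : ∀ x, ∃ y, x * ad = y * a := by
      intro x
      obtain ⟨z, hz⟩ : (x * h') * m ∈ {y : A | ∃ w, y = w * k} := by
        rw [hkm]; exact ⟨x * h', rfl⟩
      refine ⟨z * s, ?_⟩
      calc x * ad = ((x * h') * m) * l := by rw [hD]; noncomm_ring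
        _ = (z * k) * l := by rw [hz]
        _ = ((z * (s * h)) * k) * l := by rw [← hs, mul_one]
        _ = (z * s) * a := by rw [hA]; noncomm_ring
    obtain ⟨y1, hy1⟩ := key1 1
    rw [one_mul] at hy1
    obtain ⟨y2, hy2⟩ := key2 1
    rw [one_mul] at hy2
    have e1 : a * a * ad = a := by
      calc a * a * ad = (y1 * ad) * a * ad := by rw [← hy1]
        _ = y1 * (ad * a * ad) := by noncomm_ring
        _ = y1 * ad := by rw [hdad]
        _ = a := hy1.symm
    have e2 : ad * ad * a = ad := by
      calc ad * ad * a = (y2 * a) * ad * a := by rw [← hy2]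
        _ = y2 * (a * ad * a) := by noncomm_ring
        _ = y2 * a := by rw [hada]
        _ = ad := hy2.symm
    exact ep_of_case1 a ad ⟨hada, hdad, hherm1, hherm2⟩ e1 e2
  tfae_finish
end
end
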